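/- The sectional curvatures of G(d) satisfy, with β* := ℓ^{-1}∘β: (i) if x,y ∈ d are orthogonal with ⟨x,x⟩_d = ε1 = ±1 and ⟨y,y⟩_d = ε2 = ±1, then K(x,y) := ε1ε2⟨R(x,y)y, x⟩ = ε1ε2(¼⟨[x,y]_d, [x,y]_d⟩_d − ¾⟨β*(x,y), β*(x,y)⟩_h); (ii) if x ∈ d and h ∈ h with ⟨x,x⟩_d = ε1 = ±1 and ⟨h,h⟩_h = ε2 = ±1, then K(x, ℓ(h)) := ε1ε2⟨R(x,ℓ(h))ℓ(h), x⟩ = (ε1ε2/4)⟨π(h)x, π(h)x⟩_d; (iii) for any u,v ∈ h*, ⟨R(u,v)v, u⟩ = 0. -/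
import Mathlib


open Module

variable {H D : Type} [LieRing H] [LieAlgebra ℝ H] [FiniteDimensional ℝ H]
  [LieRing D] [LieAlgebra ℝ D] [FiniteDimensional ℝ D]

/-- `beta BD π x y` is the element `β(x,y)` of `h*` given by `a ↦ ⟨π(a)x, y⟩_d`. -/
def beta (BD : LinearMap.BilinForm ℝ D) (π : H →ₗ[ℝ] D →ₗ[ℝ] D) (x y : D) : Dual ℝ H :=
  (BD.flip y).comp (π.flip x)

/-- The bracket on `G(d) = d ⊕ h*`: `[x₁+α₁, x₂+α₂] = [x₁,x₂]_d + β(x₁,x₂)`. -/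
def gbr (BD : LinearMap.BilinForm ℝ D) (π : H →ₗ[ℝ] D →ₗ[ℝ] D)
    (u v : D × Dual ℝ H) : D × Dual ℝ H :=
  (⁅u.1, v.1⁆, beta BD π u.1 v.1)

/-- The inverse of the isomorphism `ℓ : h → h*`, `ℓ(h) = ⟨h,·⟩_h`. -/
noncomputable def ellInv (BH : LinearMap.BilinForm ℝ H) (hBH : BH.Nondegenerate)
    (α : Dual ℝ H) : H :=
  (LinearMap.BilinForm.toDual BH hBH).symm α

/-- The metric on `G(d)`: `⟨x₁ + ℓ(h₁), x₂ + ℓ(h₂)⟩ = ⟨h₁,h₂⟩_h + ⟨x₁,x₂⟩_d`. -/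
noncomputable def gform (BH : LinearMap.BilinForm ℝ H) (hBH : BH.Nondegenerate)
    (BD : LinearMap.BilinForm ℝ D) (u v : D × Dual ℝ H) : ℝ :=
  BD u.1 v.1 + BH (ellInv BH hBH u.2) (ellInv BH hBH v.2)

/-- The Levi-Civita connection
`∇_{x₁+ℓ(h₁)}(x₂+ℓ(h₂)) = ½([x₁,x₂]_d + β(x₁,x₂) − π(h₁)x₂ − π(h₂)x₁)`. -/
noncomputable def nabG (BH : LinearMap.BilinForm ℝ H) (hBH : BH.Nondegenerate)
    (BD : LinearMap.BilinForm ℝ D) (π : H →ₗ[ℝ] D →ₗ[ℝ] D)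
    (u v : D × Dual ℝ H) : D × Dual ℝ H :=
  ((2⁻¹ : ℝ) • (⁅u.1, v.1⁆ - π (ellInv BH hBH u.2) v.1 - π (ellInv BH hBH v.2) u.1),
   (2⁻¹ : ℝ) • beta BD π u.1 v.1)

/-- The curvature `R(w₁,w₂)w₃ = ∇_{w₁}∇_{w₂}w₃ − ∇_{w₂}∇_{w₁}w₃ − ∇_{[w₁,w₂]}w₃`. -/
noncomputable def Rfun (BH : LinearMap.BilinForm ℝ H) (hBH : BH.Nondegenerate)
    (BD : LinearMap.BilinForm ℝ D) (π : H →ₗ[ℝ] D →ₗ[ℝ] D)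
    (w₁ w₂ w₃ : D × Dual ℝ H) : D × Dual ℝ H :=
  nabG BH hBH BD π w₁ (nabG BH hBH BD π w₂ w₃)
    - nabG BH hBH BD π w₂ (nabG BH hBH BD π w₁ w₃)
    - nabG BH hBH BD π (gbr BD π w₁ w₂) w₃

/-- `β* = ℓ⁻¹ ∘ β : d × d → h`. -/
noncomputable def betaStar (BH : LinearMap.BilinForm ℝ H) (hBH : BH.Nondegenerate)
    (BD : LinearMap.BilinForm ℝ D) (π : H →ₗ[ℝ] D →ₗ[ℝ] D) (x y : D) : H :=
  ellInv BH hBH (beta BD π x y)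


section AuxLemmas
set_option linter.unusedSectionVars false

lemma ellInv_zero' (BH : LinearMap.BilinForm ℝ H) (hBH : BH.Nondegenerate) :
    ellInv BH hBH 0 = 0 := map_zero _

lemma ellInv_smul' (BH : LinearMap.BilinForm ℝ H) (hBH : BH.Nondegenerate) (c : ℝ)
    (α : Dual ℝ H) : ellInv BH hBH (c • α) = c • ellInv BH hBH α := map_smul _ _ _

lemma ellInv_BH' (BH : LinearMap.BilinForm ℝ H) (hBH : BH.Nondegenerate) (h : H) :
    ellInv BH hBH (BH h) = h := by
  apply (LinearMap.BilinForm.toDual BH hBH).injective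
  ext v
  simp [ellInv, LinearMap.BilinForm.toDual_def]

lemma BH_ellInv' (BH : LinearMap.BilinForm ℝ H) (hBH : BH.Nondegenerate)
    (α : Dual ℝ H) (v : H) : BH (ellInv BH hBH α) v = α v :=
  LinearMap.BilinForm.apply_toDual_symm_apply (hB := hBH) α v

lemma beta_apply' (BD : LinearMap.BilinForm ℝ D) (π : H →ₗ[ℝ] D →ₗ[ℝ] D) (x y : D) (a : H) :
    beta BD π x y a = BD (π a x) y := rfl

end AuxLemmas

set_option maxRecDepth 4000 in
/-- The formulas for the sectional curvature of `G(d)`. -/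
theorem sectional_curvature_formulas
    (BH : LinearMap.BilinForm ℝ H)
    (hBHsymm : ∀ a b : H, BH a b = BH b a)
    (hBHnd : BH.Nondegenerate)
    (hBHinv : ∀ a b c : H, BH ⁅a, b⁆ c = - BH b ⁅a, c⁆)
    (BD : LinearMap.BilinForm ℝ D)
    (hBDsymm : ∀ x y : D, BD x y = BD y x)
    (hBDnd : BD.Nondegenerate)
    (hBDinv : ∀ x y z : D, BD ⁅x, y⁆ z = - BD y ⁅x, z⁆)
    (π : H →ₗ[ℝ] D →ₗ[ℝ] D)
    (hπder : ∀ a : H, ∀ x y : D, π a ⁅x, y⁆ = ⁅π a x, y⁆ + ⁅x, π a y⁆)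
    (hπhom : ∀ a b : H, π ⁅a, b⁆ = π a ∘ₗ π b - π b ∘ₗ π a)
    (hπskew : ∀ a : H, ∀ x y : D, BD (π a x) y = - BD x (π a y)) :
    -- (i) K(x,y) for an orthonormal pair x,y ∈ d
    (∀ (x y : D) (ε₁ ε₂ : ℝ), (ε₁ = 1 ∨ ε₁ = -1) → (ε₂ = 1 ∨ ε₂ = -1) →
      BD x y = 0 → BD x x = ε₁ → BD y y = ε₂ →
      ε₁ * ε₂ * gform BH hBHnd BD (Rfun BH hBHnd BD π (x, 0) (y, 0) (y, 0)) (x, 0)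
        = ε₁ * ε₂ * ((4⁻¹ : ℝ) * BD ⁅x, y⁆ ⁅x, y⁆
            - (3 / 4 : ℝ) * BH (betaStar BH hBHnd BD π x y) (betaStar BH hBHnd BD π x y))) ∧
    -- (ii) K(x, ℓ(h)) for unit x ∈ d and unit h ∈ h
    (∀ (x : D) (h : H) (ε₁ ε₂ : ℝ), (ε₁ = 1 ∨ ε₁ = -1) → (ε₂ = 1 ∨ ε₂ = -1) →
      BD x x = ε₁ → BH h h = ε₂ →
      ε₁ * ε₂ * gform BH hBHnd BD (Rfun BH hBHnd BD π (x, 0) (0, BH h) (0, BH h)) (x, 0)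
        = (ε₁ * ε₂ / 4) * BD (π h x) (π h x)) ∧
    -- (iii) ⟨R(u,v)v, u⟩ = 0 for u, v ∈ h*
    (∀ h₁ h₂ : H,
      gform BH hBHnd BD (Rfun BH hBHnd BD π (0, BH h₁) (0, BH h₂) (0, BH h₂)) (0, BH h₁)
        = 0) := by
  refine ⟨?_, ?_, ?_⟩
  · intro x y ε₁ ε₂ _ _ _ _ _
    have hyy : beta BD π y y = 0 := by
      ext a
      have := hπskew a y y
      rw [hBDsymm y (π a y)] at this
      simp only [beta_apply', LinearMap.zero_apply]; linarith
    obtain ⟨b, hb⟩ : ∃ b, b = ellInv BH hBHnd (beta BD π x y) := ⟨_, rfl⟩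
    have key1 : BD ⁅y, ⁅x, y⁆⁆ x = BD ⁅x, y⁆ ⁅x, y⁆ := by
      have h' : ⁅y,x⁆ = -⁅x,y⁆ := by rw [← lie_skew]
      rw [hBDinv, h', map_neg, neg_neg]
    have key2 : BD ⁅⁅x, y⁆, y⁆ x = - BD ⁅x, y⁆ ⁅x, y⁆ := by
      rw [show ⁅⁅x,y⁆,y⁆ = -⁅y,⁅x,y⁆⁆ by rw [← lie_skew], map_neg, LinearMap.neg_apply, key1]
    have key3 : BD (π b y) x = - BH b b := by
      rw [hπskew, hBDsymm, ← beta_apply' BD π x y b, hb, BH_ellInv']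
    have hbs : betaStar BH hBHnd BD π x y = b := hb.symm
    simp only [hbs]
    simp only [Rfun, nabG, gbr, gform]
    simp only [Prod.fst_sub, Prod.snd_sub, ellInv_zero', map_zero, LinearMap.zero_apply,
      zero_lie, lie_zero, smul_zero, zero_sub, sub_zero, zero_smul, hyy, ellInv_smul',
      ← hb, map_smul, map_sub, map_neg, LinearMap.smul_apply, LinearMap.sub_apply,
      LinearMap.neg_apply, smul_eq_mul, lie_smul, smul_lie]
    simp only [lie_self, lie_zero, map_zero, LinearMap.zero_apply, mul_zero, key1, key2, key3]
    ring
  · intro x h ε₁ ε₂ _ _ _ _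
    have hz : ∀ y : D, beta BD π 0 y = 0 := by intro y; ext a; simp [beta_apply']
    have hz' : ∀ y : D, beta BD π y 0 = 0 := by intro y; ext a; simp [beta_apply']
    have key : BD (π h (π h x)) x = - BD (π h x) (π h x) := by
      rw [hπskew, hBDsymm]
    simp [Rfun, nabG, gbr, gform, hz, hz', ellInv_zero', ellInv_smul', ellInv_BH', key]
    ring
  · intro h₁ h₂
    have hz : ∀ y : D, beta BD π 0 y = 0 := by intro y; ext a; simp [beta_apply']
    simp [Rfun, nabG, gbr, gform, hz, ellInv_zero', ellInv_smul', ellInv_BH']
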